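/- Integration-by-parts bound for the oscillatory Taylor remainder (key estimate in the proof of Lemma 3.3): let τ ≥ 0, ω ∈ ℝ, and let f : ℝ → E be continuously differentiable on [0,τ] with derivative f'. Then ‖∫₀^τ (τ−s)² · (iω) · e^{iωs} · f(s) ds‖ ≤ min{ |ω| · (τ³/3) · sup_{s∈[0,τ]} ‖f(s)‖ , 2τ² · sup_{s∈[0,τ]} ‖f(s)‖ + (τ³/3) · sup_{s∈[0,τ]} ‖f'(s)‖ }. -/

import Mathlib

/-- Integration-by-parts bound for the oscillatory Taylor remainder:
for `τ ≥ 0`, `ω ∈ ℝ` and `f : ℝ → E` continuously differentiable on `[0,τ]`,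
`‖∫₀^τ (τ−s)²·(iω)·e^{iωs}·f(s) ds‖` is bounded by the minimum of
`|ω|·(τ³/3)·sup‖f‖` and `2τ²·sup‖f‖ + (τ³/3)·sup‖f'‖`. -/
theorem oscillatory_taylor_remainder_bound
    {E : Type*} [NormedAddCommGroup E] [NormedSpace ℂ E] [CompleteSpace E]
    (τ : ℝ) (hτ : 0 ≤ τ) (ω : ℝ) (f f' : ℝ → E)
    (hderiv : ∀ s ∈ Set.Icc (0 : ℝ) τ, HasDerivAt f (f' s) s)
    (hcont : ContinuousOn f' (Set.Icc (0 : ℝ) τ)) :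
    ‖∫ s in (0:ℝ)..τ,
        ((((τ - s : ℝ) : ℂ) ^ 2 * (Complex.I * (ω : ℂ)) *
          Complex.exp (Complex.I * (ω : ℂ) * (s : ℂ))) • f s)‖ ≤
      min (|ω| * (τ ^ 3 / 3) * ⨆ s : Set.Icc (0 : ℝ) τ, ‖f s‖)
        (2 * τ ^ 2 * (⨆ s : Set.Icc (0 : ℝ) τ, ‖f s‖) +
          (τ ^ 3 / 3) * ⨆ s : Set.Icc (0 : ℝ) τ, ‖f' s‖) := by
  have huIcc : Set.uIcc (0:ℝ) τ = Set.Icc 0 τ := Set.uIcc_of_le hτ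
  set e : ℝ → ℂ := fun s => Complex.exp (Complex.I * (ω:ℂ) * (s:ℂ)) with he_def
  set M : ℝ := ⨆ s : Set.Icc (0 : ℝ) τ, ‖f s‖ with hM_def
  set M' : ℝ := ⨆ s : Set.Icc (0 : ℝ) τ, ‖f' s‖ with hM'_def
  have hfc : ContinuousOn f (Set.Icc 0 τ) := fun s hs =>
    (hderiv s hs).continuousAt.continuousWithinAt
  have hne : (Set.Icc (0:ℝ) τ).Nonempty := Set.nonempty_Icc.mpr hτ
  haveI : Nonempty (Set.Icc (0:ℝ) τ) := hne.to_subtype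
  have hbddf : BddAbove (Set.range fun s : Set.Icc (0:ℝ) τ => ‖f s‖) := by
    have := (isCompact_Icc.image_of_continuousOn hfc.norm).bddAbove
    rwa [Set.image_eq_range] at this
  have hbddf' : BddAbove (Set.range fun s : Set.Icc (0:ℝ) τ => ‖f' s‖) := by
    have := (isCompact_Icc.image_of_continuousOn hcont.norm).bddAbove
    rwa [Set.image_eq_range] at this
  have hM : ∀ s ∈ Set.Icc (0:ℝ) τ, ‖f s‖ ≤ M := fun s hs => le_ciSup hbddf ⟨s, hs⟩
  have hM' : ∀ s ∈ Set.Icc (0:ℝ) τ, ‖f' s‖ ≤ M' := fun s hs => le_ciSup hbddf' ⟨s, hs⟩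
  have hM0 : 0 ≤ M := le_trans (norm_nonneg (f 0)) (hM 0 (Set.left_mem_Icc.mpr hτ))
  have hce : Continuous e :=
    Complex.continuous_exp.comp (continuous_const.mul Complex.continuous_ofReal)
  have hnorme : ∀ s : ℝ, ‖e s‖ = 1 := by
    intro s
    rw [he_def]
    simp only
    rw [Complex.norm_exp]
    simp
  have hcp : Continuous (fun s : ℝ => ((τ - s:ℝ):ℂ)) :=
    Complex.continuous_ofReal.comp (continuous_const.sub continuous_id)
  set G : ℝ → E := fun s => ((((τ - s : ℝ) : ℂ) ^ 2 * (Complex.I * (ω : ℂ)) * e s) • f s)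
    with hG_def
  have hGc : ContinuousOn G (Set.Icc 0 τ) :=
    (((hcp.pow 2).mul continuous_const).mul hce).continuousOn.smul hfc
  have hI2 : (∫ s in (0:ℝ)..τ, (τ - s)^2) = τ^3/3 := by
    rw [intervalIntegral.integral_comp_sub_left (fun x => x^2) τ]
    simp [integral_pow]; ring
  have hI1 : (∫ s in (0:ℝ)..τ, (τ - s)) = τ^2/2 := by
    rw [intervalIntegral.integral_comp_sub_left (fun x => x) τ]
    simp
  have hGnorm : ∀ s ∈ Set.Icc (0:ℝ) τ, ‖G s‖ = (τ - s)^2 * |ω| * ‖f s‖ := by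
    intro s hs
    rw [hG_def]
    simp only
    rw [norm_smul, norm_mul, norm_mul, hnorme, mul_one, norm_pow]
    rw [Complex.norm_real, Real.norm_eq_abs, sq_abs,
      norm_mul, Complex.norm_I, Complex.norm_real, Real.norm_eq_abs, one_mul]
  ---- Bound 1
  have h1 : ‖∫ s in (0:ℝ)..τ, G s‖ ≤ |ω| * (τ ^ 3 / 3) * M := by
    have hint1 : IntervalIntegrable (fun s => ‖G s‖) MeasureTheory.volume 0 τ :=
      (hGc.norm.mono (by rw [huIcc])).intervalIntegrable
    have hint2 : IntervalIntegrable (fun s => |ω| * M * (τ - s)^2) MeasureTheory.volume 0 τ :=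
      Continuous.intervalIntegrable (by fun_prop) 0 τ
    calc ‖∫ s in (0:ℝ)..τ, G s‖ ≤ ∫ s in (0:ℝ)..τ, ‖G s‖ :=
          intervalIntegral.norm_integral_le_integral_norm hτ
      _ ≤ ∫ s in (0:ℝ)..τ, |ω| * M * (τ - s)^2 := by
          apply intervalIntegral.integral_mono_on hτ hint1 hint2
          intro s hs
          rw [hGnorm s hs]
          have h1 := hM s hs
          have h2 : (0:ℝ) ≤ (τ - s)^2 := sq_nonneg _
          have h3 : (0:ℝ) ≤ |ω| := abs_nonneg ω
          nlinarith [mul_le_mul_of_nonneg_left h1 (mul_nonneg h2 h3)]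
      _ = |ω| * (τ ^ 3 / 3) * M := by
          rw [intervalIntegral.integral_const_mul, hI2]; ring
  ---- Bound 2 : integration by parts
  set w : ℝ → ℂ := fun s => ((τ - s:ℝ):ℂ)^2 * e s with hw_def
  set w' : ℝ → ℂ := fun s =>
    (-2*((τ - s:ℝ):ℂ)) * e s + ((τ - s:ℝ):ℂ)^2 * (e s * (Complex.I*(ω:ℂ))) with hw'_def
  have he' : ∀ s : ℝ, HasDerivAt e (e s * (Complex.I * (ω:ℂ))) s := by
    intro s
    have h1 : HasDerivAt (fun t:ℝ => Complex.I * (ω:ℂ) * (t:ℂ)) (Complex.I*(ω:ℂ)) s := by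
      simpa using (Complex.ofRealCLM.hasDerivAt (x := s)).const_mul (Complex.I*(ω:ℂ))
    simpa using h1.cexp
  have hp' : ∀ s : ℝ, HasDerivAt (fun t : ℝ => ((τ - t:ℝ):ℂ)) (-1) s := by
    intro s
    simpa using (Complex.ofRealCLM.hasDerivAt (x := s)).const_sub (τ:ℂ)
  have hwderiv : ∀ s : ℝ, HasDerivAt w (w' s) s := by
    intro s
    have hsq : HasDerivAt (fun t : ℝ => ((τ - t:ℝ):ℂ)^2) (-2*((τ - s:ℝ):ℂ)) s := by
      have h := (hp' s).mul (hp' s)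
      have heq : (fun t:ℝ => ((τ - t:ℝ):ℂ) * ((τ - t:ℝ):ℂ)) = fun t => ((τ - t:ℝ):ℂ)^2 := by
        funext t; ring
      rw [show ((fun t:ℝ => ((τ - t:ℝ):ℂ)) * fun t => ((τ - t:ℝ):ℂ)) = fun t => ((τ - t:ℝ):ℂ)^2 from heq] at h
      exact h.congr_deriv (by ring)
    exact hsq.mul (he' s)
  have hwc : Continuous w := (hcp.pow 2).mul hce
  have hw'c : Continuous w' :=
    ((continuous_const.mul hcp).mul hce).add ((hcp.pow 2).mul (hce.mul continuous_const))
  have hprod : ∀ s ∈ Set.Icc (0:ℝ) τ,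
      HasDerivAt (fun t => w t • f t) (w' s • f s + w s • f' s) s := by
    intro s hs
    have := (hwderiv s).smul (hderiv s hs); rw [add_comm]; exact this
  have hintD : IntervalIntegrable (fun s => w' s • f s + w s • f' s) MeasureTheory.volume 0 τ := by
    apply ContinuousOn.intervalIntegrable
    rw [huIcc]
    exact (hw'c.continuousOn.smul hfc).add (hwc.continuousOn.smul hcont)
  have hFTC : (∫ s in (0:ℝ)..τ, (w' s • f s + w s • f' s)) = w τ • f τ - w 0 • f 0 := by
    apply intervalIntegral.integral_eq_sub_of_hasDerivAt
    · intro s hs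
      rw [huIcc] at hs
      exact hprod s hs
    · exact hintD
  have hwτ : w τ = 0 := by rw [hw_def]; simp
  have hw0 : w 0 = (τ:ℂ)^2 := by rw [hw_def, he_def]; simp
  set R : ℝ → E := fun s => (2*((τ - s:ℝ):ℂ) * e s) • f s - w s • f' s with hR_def
  have hRc : ContinuousOn R (Set.Icc 0 τ) :=
    (((continuous_const.mul hcp).mul hce).continuousOn.smul hfc).sub
      (hwc.continuousOn.smul hcont)
  have hintR : IntervalIntegrable R MeasureTheory.volume 0 τ :=
    (hRc.mono (by rw [huIcc])).intervalIntegrable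
  have hdecomp : ∀ s : ℝ, G s = (w' s • f s + w s • f' s) + R s := by
    intro s
    rw [hG_def, hR_def, hw_def, hw'_def]
    simp only
    module
  have key : (∫ s in (0:ℝ)..τ, G s)
      = -(((τ:ℂ)^2) • f 0) + ∫ s in (0:ℝ)..τ, R s := by
    have heq : (∫ s in (0:ℝ)..τ, G s)
        = (∫ s in (0:ℝ)..τ, ((w' s • f s + w s • f' s) + R s)) := by
      congr 1; ext s; exact hdecomp s
    rw [heq, intervalIntegral.integral_add hintD hintR, hFTC, hwτ, hw0]
    simp
  have h2 : ‖∫ s in (0:ℝ)..τ, G s‖ ≤ 2 * τ ^ 2 * M + (τ ^ 3 / 3) * M' := by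
    rw [key]
    have hb1 : ‖-(((τ:ℂ)^2) • f 0)‖ ≤ τ^2 * M := by
      rw [norm_neg, norm_smul]
      have hn : ‖((τ:ℂ)^2)‖ = τ^2 := by
        rw [norm_pow, Complex.norm_real, Real.norm_eq_abs, sq_abs]
      rw [hn]
      have := hM 0 (Set.left_mem_Icc.mpr hτ)
      nlinarith [sq_nonneg τ]
    have hb2 : ‖∫ s in (0:ℝ)..τ, R s‖ ≤ τ^2 * M + (τ^3/3) * M' := by
      have hintRn : IntervalIntegrable (fun s => ‖R s‖) MeasureTheory.volume 0 τ :=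
        ((hRc.norm).mono (by rw [huIcc])).intervalIntegrable
      have hintg : IntervalIntegrable (fun s => 2*(τ - s)*M + (τ - s)^2*M') MeasureTheory.volume 0 τ :=
        Continuous.intervalIntegrable (by fun_prop) 0 τ
      calc ‖∫ s in (0:ℝ)..τ, R s‖ ≤ ∫ s in (0:ℝ)..τ, ‖R s‖ :=
            intervalIntegral.norm_integral_le_integral_norm hτ
        _ ≤ ∫ s in (0:ℝ)..τ, (2*(τ - s)*M + (τ - s)^2*M') := by
            apply intervalIntegral.integral_mono_on hτ hintRn hintg
            intro s hs
            have hτs : 0 ≤ τ - s := sub_nonneg.mpr hs.2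
            have hn1 : ‖(2*((τ - s:ℝ):ℂ) * e s) • f s‖ = 2*(τ-s)*‖f s‖ := by
              rw [norm_smul, norm_mul, norm_mul, hnorme, mul_one]
              rw [Complex.norm_real, Real.norm_eq_abs,
                abs_of_nonneg hτs]
              norm_num
            have hn2 : ‖w s • f' s‖ = (τ-s)^2*‖f' s‖ := by
              rw [hw_def]
              simp only
              rw [norm_smul, norm_mul, hnorme, mul_one, norm_pow,
                Complex.norm_real, Real.norm_eq_abs, sq_abs]
            calc ‖R s‖ ≤ ‖(2*((τ - s:ℝ):ℂ) * e s) • f s‖ + ‖w s • f' s‖ := norm_sub_le _ _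
              _ = 2*(τ-s)*‖f s‖ + (τ-s)^2*‖f' s‖ := by rw [hn1, hn2]
              _ ≤ 2*(τ - s)*M + (τ - s)^2*M' := by
                  have hfM := hM s hs; have hfM' := hM' s hs
                  nlinarith [sq_nonneg (τ - s), norm_nonneg (f s), norm_nonneg (f' s),
                    mul_le_mul_of_nonneg_left hfM hτs,
                    mul_le_mul_of_nonneg_left hfM' (sq_nonneg (τ - s))]
        _ = τ^2 * M + (τ^3/3) * M' := by
            rw [intervalIntegral.integral_add
              (Continuous.intervalIntegrable (by fun_prop) 0 τ)
              (Continuous.intervalIntegrable (by fun_prop) 0 τ),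
              intervalIntegral.integral_mul_const, intervalIntegral.integral_mul_const,
              intervalIntegral.integral_const_mul, hI1, hI2]
            ring
    calc ‖-(((τ:ℂ)^2) • f 0) + ∫ s in (0:ℝ)..τ, R s‖
        ≤ ‖-(((τ:ℂ)^2) • f 0)‖ + ‖∫ s in (0:ℝ)..τ, R s‖ := norm_add_le _ _
      _ ≤ τ^2 * M + (τ^2 * M + (τ^3/3) * M') := add_le_add hb1 hb2
      _ = 2 * τ ^ 2 * M + (τ ^ 3 / 3) * M' := by ring
  exact le_min h1 h2
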